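/- Define J_k(y) = ∑_{m=0}^∞ (−1)^m (y/2)^{2m+k}/(m!(m+k)!) for integers k ≥ 0. Then for all y ∈ ℝ and t ∈ ℝ, ∫₀^∞ e^{−λ} J₀(√(y² + 2λye^t)) dλ = ∑_{k=0}^∞ (−1)^k e^{kt} J_k(y), where J₀(√w) is interpreted via the entire even power series ∑_{m≥0}(−1)^m w^m/(4^m(m!)²), and the right-hand series converges absolutely. -/

import Mathlib

/-- Bessel function of the first kind of integer order `k`, via its power series. -/
noncomputable def besselJ (k : ℕ) (y : ℝ) : ℝ :=
  ∑' m : ℕ, (-1) ^ m * (y / 2) ^ (2 * m + k)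
    / ((Nat.factorial m : ℝ) * (Nat.factorial (m + k) : ℝ))

open MeasureTheory Real Set Finset

namespace BesselAux

/-- The coefficient appearing in the binomial expansion of the integrand. -/
noncomputable def cc (y t : ℝ) (n k : ℕ) : ℝ :=
  (-1)^(n+k) * ((n+k).choose n : ℝ) * (y^2)^n * (2*y*Real.exp t)^k
    / (4^(n+k) * (((n+k).factorial : ℝ))^2)

lemma choose_fact_eq (n k : ℕ) :
    (((n+k).choose n : ℝ)) * (k.factorial : ℝ) / (((n+k).factorial : ℝ))^2
      = 1 / ((n.factorial : ℝ) * ((n+k).factorial : ℝ)) := by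
  have h : (n+k).choose n * n.factorial * k.factorial = (n+k).factorial := by
    have := Nat.choose_mul_factorial_mul_factorial (Nat.le_add_right n k)
    simpa [Nat.add_sub_cancel_left] using this
  have h' : (((n+k).choose n : ℝ)) * (n.factorial : ℝ) * (k.factorial : ℝ)
      = ((n+k).factorial : ℝ) := by exact_mod_cast congrArg (Nat.cast : ℕ → ℝ) h
  have hn : (n.factorial : ℝ) ≠ 0 := by exact_mod_cast n.factorial_ne_zero
  have hnk : ((n+k).factorial : ℝ) ≠ 0 := by exact_mod_cast (n+k).factorial_ne_zero
  field_simp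
  nlinarith [h']

lemma integrableOn_exp_neg_pow (k : ℕ) :
    IntegrableOn (fun x : ℝ => Real.exp (-x) * x ^ k) (Ioi 0) := by
  have h := Real.GammaIntegral_convergent (s := (k : ℝ) + 1) (by positivity)
  refine h.congr_fun ?_ measurableSet_Ioi
  intro x hx
  simp [Real.rpow_natCast]

lemma integral_exp_neg_pow (k : ℕ) :
    ∫ x in Ioi (0:ℝ), Real.exp (-x) * x ^ k = (k.factorial : ℝ) := by
  have h := Real.Gamma_eq_integral (s := (k : ℝ) + 1) (by positivity)
  have h2 : Real.Gamma ((k : ℝ) + 1) = (k.factorial : ℝ) := Real.Gamma_nat_eq_factorial k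
  rw [h2] at h
  rw [h]
  refine setIntegral_congr_fun measurableSet_Ioi ?_
  intro x hx
  simp [Real.rpow_natCast]

lemma pow_aux (y E : ℝ) (n k : ℕ) :
    (y^2)^n * (2*y*E)^k / (4:ℝ)^(n+k) = (y/2)^(2*n+k) * E^k := by
  have h4 : (4:ℝ)^(n+k) = 2^(2*n+k) * 2^k := by
    rw [show (4:ℝ) = 2^2 by norm_num, ← pow_mul, ← pow_add]
    ring_nf
  have hy : (y/2)^(2*n+k) = (y^2)^n * y^k / 2^(2*n+k) := by
    rw [div_pow, pow_add, pow_mul]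
  have h2 : (0:ℝ) < 2^(2*n+k) := by positivity
  have h2' : (0:ℝ) < 2^k := by positivity
  rw [h4, mul_pow, mul_pow, hy]
  field_simp

lemma cc_mul_fact (y t : ℝ) (n k : ℕ) :
    cc y t n k * (k.factorial : ℝ)
      = (-1)^(n+k) * Real.exp (k * t) * (y/2)^(2*n+k)
        / ((n.factorial : ℝ) * ((n+k).factorial : ℝ)) := by
  have hE : Real.exp ((k:ℝ) * t) = (Real.exp t) ^ k := Real.exp_nat_mul t k
  have h1 : cc y t n k * (k.factorial : ℝ)
      = (-1:ℝ)^(n+k) * ((((n+k).choose n : ℝ)) * (k.factorial : ℝ) / (((n+k).factorial : ℝ))^2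
          * ((y^2)^n * (2*y*Real.exp t)^k / (4:ℝ)^(n+k))) := by
    unfold cc; ring
  rw [h1, choose_fact_eq, pow_aux, hE]
  ring

lemma abs_cc_fact_le (y t : ℝ) (n k : ℕ) :
    |cc y t n k| * (k.factorial : ℝ)
      ≤ ((y^2/4)^n / n.factorial) * ((|y| * Real.exp t / 2)^k / k.factorial) := by
  have hk : (0:ℝ) < (k.factorial : ℝ) := by exact_mod_cast k.factorial_pos
  have hn : (0:ℝ) < (n.factorial : ℝ) := by exact_mod_cast n.factorial_pos
  have hnk : (0:ℝ) < ((n+k).factorial : ℝ) := by exact_mod_cast (n+k).factorial_pos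
  have habs : |cc y t n k| * (k.factorial : ℝ) = |cc y t n k * (k.factorial : ℝ)| := by
    rw [abs_mul, abs_of_pos hk]
  rw [habs, cc_mul_fact, abs_div, abs_mul, abs_mul, abs_pow, abs_neg, abs_one, one_pow,
    one_mul, Real.abs_exp, abs_pow,
    abs_of_pos (by positivity : (0:ℝ) < (n.factorial : ℝ) * ((n+k).factorial : ℝ))]
  have hE : Real.exp ((k:ℝ) * t) = (Real.exp t) ^ k := Real.exp_nat_mul t k
  have hy2 : |y/2| = |y|/2 := by rw [abs_div]; norm_num
  have hsplit : (|y|/2)^(2*n+k) = (y^2/4)^n * (|y|/2)^k := by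
    rw [pow_add, pow_mul]
    congr 2
    rw [div_pow, sq_abs]
    norm_num
  rw [hE, hy2, hsplit]
  have hmul : (|y| * Real.exp t / 2)^k = (|y|/2)^k * (Real.exp t)^k := by
    rw [← mul_pow]; ring_nf
  rw [hmul, div_mul_div_comm,
    show (Real.exp t)^k * ((y^2/4)^n * (|y|/2)^k) = (y^2/4)^n * ((|y|/2)^k * (Real.exp t)^k)
      from by ring]
  gcongr
  exact Nat.le_add_left k n

lemma summable_bound (a b : ℝ) (ha : 0 ≤ a) (hb : 0 ≤ b) :
    Summable (fun p : ℕ×ℕ => (a^p.1/(p.1.factorial : ℝ)) * (b^p.2/(p.2.factorial : ℝ))) := by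
  have h := Summable.mul_of_nonneg (f := fun n : ℕ => a^n/(n.factorial:ℝ))
    (g := fun k : ℕ => b^k/(k.factorial:ℝ)) (Real.summable_pow_div_factorial a)
    (Real.summable_pow_div_factorial b) (fun n => by positivity) (fun n => by positivity)
  exact h

lemma summable_abs_cc_fact (y t : ℝ) :
    Summable (fun p : ℕ×ℕ => |cc y t p.1 p.2| * (p.2.factorial : ℝ)) := by
  refine Summable.of_nonneg_of_le (fun p => by positivity)
    (fun p => abs_cc_fact_le y t p.1 p.2) (summable_bound _ _ (by positivity) (by positivity))

lemma abs_cc_pow_le (y t l : ℝ) (n k : ℕ) :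
    |cc y t n k * l^k|
      ≤ ((y^2/4)^n / n.factorial) * ((|y| * Real.exp t / 2 * |l|)^k / k.factorial) := by
  have hk1 : (1:ℝ) ≤ (k.factorial : ℝ) := by exact_mod_cast k.factorial_pos
  have h1 : |cc y t n k * l^k| = |cc y t n k| * |l|^k := by
    rw [abs_mul, abs_pow]
  have h2 : |cc y t n k| * |l|^k ≤ (|cc y t n k| * (k.factorial : ℝ)) * |l|^k := by
    have := le_mul_of_one_le_right (abs_nonneg (cc y t n k)) hk1
    exact mul_le_mul_of_nonneg_right this (by positivity)
  have h3 : (|cc y t n k| * (k.factorial : ℝ)) * |l|^k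
      ≤ (((y^2/4)^n / n.factorial) * ((|y| * Real.exp t / 2)^k / k.factorial)) * |l|^k :=
    mul_le_mul_of_nonneg_right (abs_cc_fact_le y t n k) (by positivity)
  have h4 : (((y^2/4)^n / n.factorial) * ((|y| * Real.exp t / 2)^k / k.factorial)) * |l|^k
      = ((y^2/4)^n / n.factorial) * ((|y| * Real.exp t / 2 * |l|)^k / k.factorial) := by
    rw [mul_pow]; ring
  rw [h1, ← h4]
  exact le_trans h2 h3

lemma summable_cc_pow (y t l : ℝ) :
    Summable (fun p : ℕ×ℕ => cc y t p.1 p.2 * l^p.2) := by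
  rw [← summable_abs_iff]
  refine Summable.of_nonneg_of_le (fun p => abs_nonneg _)
    (fun p => abs_cc_pow_le y t l p.1 p.2)
    (summable_bound _ _ (by positivity) (by positivity))

lemma tsum_expand (y t l : ℝ) :
    ∑' p : ℕ×ℕ, cc y t p.1 p.2 * l^p.2
      = ∑' m : ℕ, (-1)^m * (y^2 + 2*l*y*Real.exp t)^m
          / (4^m * ((m.factorial : ℝ))^2) := by
  have hs := summable_cc_pow y t l
  have hse : Summable ((fun p : ℕ×ℕ => cc y t p.1 p.2 * l^p.2) ∘
      Finset.HasAntidiagonal.sigmaAntidiagonalEquivProd) :=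
    (Equiv.summable_iff Finset.HasAntidiagonal.sigmaAntidiagonalEquivProd).mpr hs
  calc ∑' p : ℕ×ℕ, cc y t p.1 p.2 * l^p.2
      = ∑' x : Σ n : ℕ, {p : ℕ×ℕ // p ∈ antidiagonal n},
          ((fun p : ℕ×ℕ => cc y t p.1 p.2 * l^p.2) ∘ Finset.HasAntidiagonal.sigmaAntidiagonalEquivProd) x :=
        (Finset.HasAntidiagonal.sigmaAntidiagonalEquivProd.tsum_eq _).symm
    _ = ∑' (m : ℕ) (x : {p : ℕ×ℕ // p ∈ antidiagonal m}),
          ((fun p : ℕ×ℕ => cc y t p.1 p.2 * l^p.2) ∘ Finset.HasAntidiagonal.sigmaAntidiagonalEquivProd) ⟨m, x⟩ :=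
        Summable.tsum_sigma hse
    _ = ∑' m : ℕ, (-1)^m * (y^2 + 2*l*y*Real.exp t)^m / (4^m * ((m.factorial : ℝ))^2) := ?_
  refine tsum_congr fun m => ?_
  calc (∑' x : {p : ℕ×ℕ // p ∈ antidiagonal m},
        ((fun p : ℕ×ℕ => cc y t p.1 p.2 * l^p.2) ∘ Finset.HasAntidiagonal.sigmaAntidiagonalEquivProd) ⟨m, x⟩)
      = ∑ p ∈ antidiagonal m, cc y t p.1 p.2 * l^p.2 :=
        Finset.tsum_subtype (antidiagonal m) (fun p : ℕ×ℕ => cc y t p.1 p.2 * l^p.2)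
    _ = (-1)^m * (y^2 + 2*l*y*Real.exp t)^m / (4^m * ((m.factorial : ℝ))^2) := by
        rw [Commute.add_pow' (Commute.all (y^2) (2*l*y*Real.exp t)) m, Finset.mul_sum,
          Finset.sum_div]
        refine Finset.sum_congr rfl fun p hp => ?_
        have hm : p.1 + p.2 = m := Finset.HasAntidiagonal.mem_antidiagonal.mp hp
        subst hm
        unfold cc
        rw [nsmul_eq_mul]
        rw [show 2*l*y*Real.exp t = (2*y*Real.exp t)*l from by ring, mul_pow]
        ring

lemma tsum_row (y t : ℝ) (k : ℕ) :
    ∑' n : ℕ, cc y t n k * (k.factorial : ℝ)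
      = (-1)^k * Real.exp (k * t) * besselJ k y := by
  have h1 : ∀ n : ℕ, cc y t n k * (k.factorial : ℝ)
      = ((-1:ℝ)^k * Real.exp (k*t))
          * ((-1)^n * (y/2)^(2*n+k) / ((n.factorial:ℝ) * ((n+k).factorial:ℝ))) := by
    intro n; rw [cc_mul_fact, pow_add]; ring
  rw [tsum_congr h1, tsum_mul_left]
  rfl

end BesselAux

open BesselAux

theorem integral_eq_bessel_series (y t : ℝ) :
    Summable (fun k : ℕ => |(-1 : ℝ) ^ k * Real.exp (k * t) * besselJ k y|) ∧
    ∫ l in Set.Ioi (0 : ℝ),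
        Real.exp (-l) *
          (∑' m : ℕ, (-1) ^ m * (y ^ 2 + 2 * l * y * Real.exp t) ^ m
            / (4 ^ m * ((Nat.factorial m : ℝ)) ^ 2))
      = ∑' k : ℕ, (-1) ^ k * Real.exp (k * t) * besselJ k y := by
  set F : ℕ×ℕ → ℝ → ℝ := fun p l => cc y t p.1 p.2 * (Real.exp (-l) * l ^ p.2) with hF
  have hint : ∀ p : ℕ×ℕ, Integrable (F p) (volume.restrict (Ioi 0)) := fun p =>
    (integrableOn_exp_neg_pow p.2).const_mul _
  have hnormval : ∀ p : ℕ×ℕ, (∫ l in Ioi (0:ℝ), ‖F p l‖)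
      = |cc y t p.1 p.2| * (p.2.factorial : ℝ) := by
    intro p
    have h1 : ∀ l ∈ Ioi (0:ℝ), ‖F p l‖ = |cc y t p.1 p.2| * (Real.exp (-l) * l ^ p.2) := by
      intro l hl
      have hl0 : (0:ℝ) ≤ l := le_of_lt hl
      rw [hF, Real.norm_eq_abs, abs_mul, abs_of_nonneg (by positivity : (0:ℝ) ≤ Real.exp (-l) * l ^ p.2)]
    rw [setIntegral_congr_fun measurableSet_Ioi h1, integral_const_mul, integral_exp_neg_pow]
  have hsumnorm : Summable (fun p : ℕ×ℕ => ∫ l in Ioi (0:ℝ), ‖F p l‖) := by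
    refine (summable_abs_cc_fact y t).congr fun p => ?_
    exact (hnormval p).symm
  have key := integral_tsum_of_summable_integral_norm hint hsumnorm
  have hAabs : Summable fun p : ℕ×ℕ => |cc y t p.1 p.2 * (p.2.factorial : ℝ)| := by
    refine (summable_abs_cc_fact y t).congr fun p => ?_
    have : (0:ℝ) ≤ (p.2.factorial : ℝ) := by positivity
    rw [abs_mul, abs_of_nonneg this]
  have hA : Summable fun p : ℕ×ℕ => cc y t p.1 p.2 * (p.2.factorial : ℝ) :=
    summable_abs_iff.mp hAabs
  have hswap : Summable fun q : ℕ×ℕ => |cc y t q.2 q.1 * (q.1.factorial : ℝ)| := by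
    have := (Equiv.summable_iff (Equiv.prodComm ℕ ℕ)).mpr hAabs
    exact this
  have hprod := (summable_prod_of_nonneg
    (f := fun q : ℕ×ℕ => |cc y t q.2 q.1 * (q.1.factorial : ℝ)|)
    (fun q => abs_nonneg _)).mp hswap
  -- first component
  constructor
  · refine Summable.of_nonneg_of_le (fun k => abs_nonneg _) (fun k => ?_) hprod.2
    have hrow := tsum_row y t k
    rw [← hrow]
    have := norm_tsum_le_tsum_norm (f := fun n : ℕ => cc y t n k * (k.factorial : ℝ))
      (by simpa only [Real.norm_eq_abs] using hprod.1 k)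
    simpa only [Real.norm_eq_abs] using this
  -- second component
  · calc ∫ l in Ioi (0:ℝ), Real.exp (-l) *
          (∑' m : ℕ, (-1) ^ m * (y ^ 2 + 2 * l * y * Real.exp t) ^ m
            / (4 ^ m * ((Nat.factorial m : ℝ)) ^ 2))
        = ∫ l in Ioi (0:ℝ), ∑' p : ℕ×ℕ, F p l := by
          refine setIntegral_congr_fun measurableSet_Ioi fun l _ => ?_
          rw [← tsum_expand y t l]
          rw [show (∑' p : ℕ×ℕ, F p l)
              = ∑' p : ℕ×ℕ, Real.exp (-l) * (cc y t p.1 p.2 * l ^ p.2) from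
            tsum_congr fun p => by rw [hF]; ring]
          rw [tsum_mul_left]
      _ = ∑' p : ℕ×ℕ, ∫ l in Ioi (0:ℝ), F p l := key.symm
      _ = ∑' p : ℕ×ℕ, cc y t p.1 p.2 * (p.2.factorial : ℝ) := by
          refine tsum_congr fun p => ?_
          rw [hF]
          rw [integral_const_mul, integral_exp_neg_pow]
      _ = ∑' q : ℕ×ℕ, cc y t q.2 q.1 * (q.1.factorial : ℝ) :=
          ((Equiv.prodComm ℕ ℕ).tsum_eq _).symm
      _ = ∑' (k : ℕ) (n : ℕ), cc y t n k * (k.factorial : ℝ) :=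
          Summable.tsum_prod' (summable_abs_iff.mp hswap)
            (fun k => by
              have := hprod.1 k
              exact summable_abs_iff.mp (by simpa using this))
      _ = ∑' k : ℕ, (-1) ^ k * Real.exp (k * t) * besselJ k y :=
          tsum_congr fun k => tsum_row y t k
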